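/- The minimal order of an (m+1)-colored rooted tree with ramification number 𝔯(τ)=k is k − 1/2, attained exactly by the trees in 𝒯_{𝔯,k} = {[•_{l₁}, τ]_{l₂} : τ ∈ 𝒯_{𝔯,k−1}, l₁, l₂ ≥ 1} for k ≥ 2, with 𝒯_{𝔯,1}={•_l : l ≥ 1}. -/

import Mathlib

inductive CTree (m : ℕ) : Type
  | node : Fin (m + 1) → List (CTree m) → CTree m

namespace CTree

variable {m : ℕ}

def rho : CTree m → ℚ
  | .node l ts => (if (l : ℕ) = 0 then 1 else 1/2) + (ts.attach.map (fun t => rho t.1)).sum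
decreasing_by
  all_goals try simp only [CTree.node.sizeOf_spec, List.cons.sizeOf_spec, List.nil.sizeOf_spec]
  all_goals try have := List.sizeOf_lt_of_mem t.2
  all_goals omega

def height : CTree m → ℕ
  | .node _ ts => 1 + (ts.attach.map (fun t => height t.1)).foldr max 0
decreasing_by
  all_goals try simp only [CTree.node.sizeOf_spec, List.cons.sizeOf_spec, List.nil.sizeOf_spec]
  all_goals try have := List.sizeOf_lt_of_mem t.2
  all_goals omega

def ram : CTree m → ℕ
  | .node _ [] => 1
  | .node _ [t] => ram t
  | .node _ ts => 1 + (ts.attach.map (fun t => ram t.1)).foldr max 0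
decreasing_by
  all_goals try simp only [CTree.node.sizeOf_spec, List.cons.sizeOf_spec, List.nil.sizeOf_spec]
  all_goals try have := List.sizeOf_lt_of_mem t.2
  all_goals omega

def dbl : CTree m → ℕ
  | .node _ [] => 1
  | .node _ ts =>
      let ds := ts.attach.map (fun t => dbl t.1)
      let M := ds.foldr max 0
      if 2 ≤ ds.count M then M + 1 else M
decreasing_by
  all_goals try simp only [CTree.node.sizeOf_spec, List.cons.sizeOf_spec, List.nil.sizeOf_spec]
  all_goals try have := List.sizeOf_lt_of_mem t.2
  all_goals omega


end CTree


namespace CTree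

variable {m : ℕ}

lemma rho_node (l : Fin (m+1)) (ts : List (CTree m)) :
    rho (CTree.node l ts) = (if (l : ℕ) = 0 then 1 else 1/2) + (ts.map rho).sum := by
  rw [rho]; simp [List.attach_map_val]

lemma ram_nil (l : Fin (m+1)) : ram (CTree.node l ([] : List (CTree m))) = 1 := by rw [ram]

lemma ram_single (l : Fin (m+1)) (t : CTree m) : ram (CTree.node l [t]) = ram t := by rw [ram]

lemma ram_cons2 (l : Fin (m+1)) (a b : CTree m) (ts : List (CTree m)) :
    ram (CTree.node l (a::b::ts)) = 1 + ((a::b::ts).map ram).foldr max 0 := by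
  rw [ram]
  · simp [List.attach_map_val]
  · simp
  · simp

lemma ram_pair (l : Fin (m+1)) (a b : CTree m) :
    ram (CTree.node l [a, b]) = 1 + max (ram a) (ram b) := by
  simp [ram_cons2]

lemma le_foldr_max {l : List ℕ} {x : ℕ} (h : x ∈ l) : x ≤ l.foldr max 0 := by
  induction l with
  | nil => simp at h
  | cons y ys ih =>
    rcases List.mem_cons.1 h with rfl | h
    · simp only [List.foldr_cons]; omega
    · have := ih h; simp only [List.foldr_cons]; omega

lemma foldr_max_mem (l : List ℕ) : l.foldr max 0 = 0 ∨ l.foldr max 0 ∈ l := by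
  induction l with
  | nil => left; simp
  | cons y ys ih =>
    simp only [List.foldr_cons]
    rcases ih with h | h
    · rw [h]; right; simp
    · rcases Nat.le_total y (ys.foldr max 0) with hle | hle
      · right; rw [Nat.max_eq_right hle]; exact List.mem_cons_of_mem _ h
      · right; rw [Nat.max_eq_left hle]; exact List.mem_cons_self

lemma sizeOf_lt_of_mem' {t : CTree m} {l : Fin (m+1)} {ts : List (CTree m)} (h : t ∈ ts) :
    sizeOf t < sizeOf (CTree.node l ts) := by
  have := List.sizeOf_lt_of_mem h
  simp only [CTree.node.sizeOf_spec]
  omega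

lemma one_le_ram (τ : CTree m) : 1 ≤ ram τ := by
  have key : ∀ n (τ : CTree m), sizeOf τ < n → 1 ≤ ram τ := by
    intro n
    induction n with
    | zero => intro τ h; omega
    | succ n ih =>
      rintro ⟨l, ts⟩ h
      match ts, h with
      | [], h => rw [ram_nil]
      | [t], h =>
        rw [ram_single]
        exact ih t (by have := sizeOf_lt_of_mem' (l := l) (ts := [t]) (List.mem_singleton_self t); omega)
      | a::b::r, h => rw [ram_cons2]; omega
  exact key (sizeOf τ + 1) τ (by omega)

lemma half_le_rho (τ : CTree m) : 1/2 ≤ rho τ := by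
  have key : ∀ n (τ : CTree m), sizeOf τ < n → 1/2 ≤ rho τ := by
    intro n
    induction n with
    | zero => intro τ h; omega
    | succ n ih =>
      rintro ⟨l, ts⟩ h
      rw [rho_node]
      have hs : 0 ≤ (ts.map rho).sum := by
        apply List.sum_nonneg
        intro x hx
        obtain ⟨t, ht, rfl⟩ := List.mem_map.1 hx
        have := ih t (by have := sizeOf_lt_of_mem' (l := l) ht; omega)
        linarith
      split <;> linarith
  exact key (sizeOf τ + 1) τ (by omega)

lemma sum_rho_ge (ts : List (CTree m)) : (ts.length : ℚ) * (1/2) ≤ (ts.map rho).sum := by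
  induction ts with
  | nil => simp
  | cons t ts ih =>
    have := half_le_rho t
    simp only [List.map_cons, List.sum_cons, List.length_cons]
    push_cast
    linarith

lemma sum_rho_mem_ge {ts : List (CTree m)} {t : CTree m} (h : t ∈ ts) :
    rho t + ((ts.length : ℚ) - 1) * (1/2) ≤ (ts.map rho).sum := by
  induction ts with
  | nil => simp at h
  | cons s ts ih =>
    simp only [List.map_cons, List.sum_cons, List.length_cons]
    rcases List.mem_cons.1 h with rfl | h
    · have := sum_rho_ge ts; push_cast; linarith
    · have := ih h
      have := half_le_rho s
      push_cast at *
      linarith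

lemma ram_le_rho (τ : CTree m) : (ram τ : ℚ) - 1/2 ≤ rho τ := by
  have key : ∀ n (τ : CTree m), sizeOf τ < n → (ram τ : ℚ) - 1/2 ≤ rho τ := by
    intro n
    induction n with
    | zero => intro τ h; omega
    | succ n ih =>
      rintro ⟨l, ts⟩ h
      have hw : (1:ℚ)/2 ≤ (if (l : ℕ) = 0 then (1:ℚ) else 1/2) := by split <;> norm_num
      match ts, h with
      | [], h => rw [ram_nil, rho_node]; simp only [List.map_nil, List.sum_nil, add_zero]; rw [Nat.cast_one]; linarith
      | [t], h =>
        rw [ram_single, rho_node]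
        have := ih t (by have := sizeOf_lt_of_mem' (l := l) (ts := [t]) (List.mem_singleton_self t); omega)
        simp only [List.map_cons, List.map_nil, List.sum_cons, List.sum_nil, add_zero]
        linarith
      | a::b::r, h =>
        rw [ram_cons2, rho_node]
        have hM : ((a::b::r).map ram).foldr max 0 ∈ (a::b::r).map ram := by
          rcases foldr_max_mem ((a::b::r).map ram) with h0 | hmem
          · exfalso
            have h1 : ram a ∈ (a::b::r).map ram := by simp
            have := le_foldr_max h1
            have := one_le_ram a
            omega
          · exact hmem
        obtain ⟨t, htL, htM⟩ := List.mem_map.1 hM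
        have hlen : (2:ℚ) ≤ (((a::b::r) : List (CTree m)).length : ℚ) := by
          have : 2 ≤ ((a::b::r) : List (CTree m)).length := by simp only [List.length_cons]; omega
          exact_mod_cast this
        have hsum := sum_rho_mem_ge htL
        have hrt := ih t (by have := sizeOf_lt_of_mem' (l := l) htL; omega)
        rw [htM] at hrt
        push_cast
        linarith
  exact key (sizeOf τ + 1) τ (by omega)

lemma rho_eq_half {τ : CTree m} (h : rho τ = 1/2) :
    ∃ l : Fin (m+1), 1 ≤ (l : ℕ) ∧ τ = CTree.node l [] := by
  obtain ⟨l, ts⟩ := τ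
  rw [rho_node] at h
  have hw : (1:ℚ)/2 ≤ (if (l : ℕ) = 0 then (1:ℚ) else 1/2) := by split <;> norm_num
  match ts, h with
  | [], h =>
    refine ⟨l, ?_, rfl⟩
    simp only [List.map_nil, List.sum_nil, add_zero] at h
    by_contra hc
    have : (l : ℕ) = 0 := by omega
    rw [if_pos this] at h; norm_num at h
  | t::ts, h =>
    exfalso
    have h1 := half_le_rho t
    have h2 := sum_rho_ge ts
    simp only [List.map_cons, List.sum_cons] at h
    have h3 : (0:ℚ) ≤ (ts.length : ℚ) * (1/2) := by positivity
    linarith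

def mt (hm : 1 ≤ m) : ℕ → CTree m
  | 0 => CTree.node ⟨1, by omega⟩ []
  | n+1 => CTree.node ⟨1, by omega⟩ [CTree.node ⟨1, by omega⟩ [], mt hm n]

lemma ram_mt (hm : 1 ≤ m) (n : ℕ) : ram (mt hm n) = n + 1 := by
  induction n with
  | zero => rw [mt, ram_nil]
  | succ n ih => rw [mt, ram_pair, ram_nil, ih]; omega

lemma rho_mt (hm : 1 ≤ m) (n : ℕ) : rho (mt hm n) = (n : ℚ) + 1/2 := by
  induction n with
  | zero => rw [mt, rho_node]; simp
  | succ n ih =>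
    rw [mt, rho_node, List.map_cons, List.map_cons, List.map_nil, rho_node]
    simp only [List.map_nil, List.sum_nil, List.sum_cons, ih]
    push_cast
    ring

lemma perm_pair {α : Type*} {a b : α} {ts : List α} (h : List.Perm ts [a,b]) :
    ts = [a,b] ∨ ts = [b,a] := by
  match ts, h.length_eq with
  | [x,y], _ =>
    have hx : x = a ∨ x = b := by simpa using h.subset (by simp : x ∈ [x,y])
    rcases hx with rfl | rfl
    · left; have : List.Perm [y] [b] := (List.perm_cons x).1 h
      simp [List.perm_singleton.1 this]
    · right; have h2 : List.Perm [x,y] [x,a] := h.trans (List.Perm.swap x a [])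
      have : List.Perm [y] [a] := (List.perm_cons x).1 h2
      simp [List.perm_singleton.1 this]

lemma key_forward {k : ℕ} (hk : 2 ≤ k) {τ : CTree m} (hr : ram τ = k)
    (hρ : rho τ = (k : ℚ) - 1/2) :
    ∃ (l₁ l₂ : Fin (m+1)) (σ : CTree m) (ts : List (CTree m)),
      1 ≤ (l₁ : ℕ) ∧ 1 ≤ (l₂ : ℕ) ∧ ram σ = k - 1 ∧ rho σ = (k : ℚ) - 1 - 1/2 ∧
      List.Perm ts [CTree.node l₁ [], σ] ∧ τ = CTree.node l₂ ts := by
  obtain ⟨l, ts⟩ := τ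
  have hw : (1:ℚ)/2 ≤ (if (l : ℕ) = 0 then (1:ℚ) else 1/2) := by split <;> norm_num
  match ts, hr, hρ with
  | [], hr, hρ => rw [ram_nil] at hr; omega
  | [t], hr, hρ =>
    exfalso
    rw [ram_single] at hr
    rw [rho_node] at hρ
    have h1 := ram_le_rho t
    rw [hr] at h1
    simp only [List.map_cons, List.map_nil, List.sum_cons, List.sum_nil, add_zero] at hρ
    linarith
  | a::b::r, hr, hρ =>
    rw [ram_cons2] at hr
    rw [rho_node] at hρ
    have hM : ((a::b::r).map ram).foldr max 0 ∈ (a::b::r).map ram := by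
      rcases foldr_max_mem ((a::b::r).map ram) with h0 | hmem
      · exfalso
        have h1 : ram a ∈ (a::b::r).map ram := by simp
        have := le_foldr_max h1
        have := one_le_ram a
        omega
      · exact hmem
    obtain ⟨t, htL, htM⟩ := List.mem_map.1 hM
    have hMk : ram t = k - 1 := by omega
    have hMQ : (ram t : ℚ) = (k : ℚ) - 1 := by
      rw [hMk, Nat.cast_sub (by omega : 1 ≤ k), Nat.cast_one]
    have hrt : (k:ℚ) - 1 - 1/2 ≤ rho t := by
      have := ram_le_rho t; rw [hMQ] at this; linarith
    match r, hρ, htL with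
    | c::r', hρ, htL =>
      exfalso
      have hlen : (3:ℚ) ≤ (((a::b::c::r') : List (CTree m)).length : ℚ) := by
        have : 3 ≤ ((a::b::c::r') : List (CTree m)).length := by
          simp only [List.length_cons]; omega
        exact_mod_cast this
      have hsum := sum_rho_mem_ge htL
      have h1 := half_le_rho t
      linarith
    | [], hρ, htL =>
      simp only [List.map_cons, List.map_nil, List.sum_cons, List.sum_nil, add_zero] at hρ
      have hla := half_le_rho a
      have hlb := half_le_rho b
      have hl0 : (l : ℕ) ≠ 0 := by
        intro h0
        rw [if_pos h0] at hρ
        rcases List.mem_cons.1 htL with rfl | ht'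
        · linarith
        · have : t = b := by simpa using ht'
          subst this; linarith
      rw [if_neg hl0] at hρ
      rcases List.mem_cons.1 htL with rfl | ht'
      · have hrb : rho b = 1/2 := by linarith
        have hra : rho t = (k:ℚ) - 1 - 1/2 := by linarith
        obtain ⟨l₁, hl₁, rfl⟩ := rho_eq_half hrb
        exact ⟨l₁, l, t, [t, CTree.node l₁ []], hl₁, by omega, hMk, hra,
          List.Perm.swap _ _ _, rfl⟩
      · have : t = b := by simpa using ht'
        subst this
        have hra : rho a = 1/2 := by linarith
        have hrb : rho t = (k:ℚ) - 1 - 1/2 := by linarith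
        obtain ⟨l₁, hl₁, rfl⟩ := rho_eq_half hra
        exact ⟨l₁, l, t, [CTree.node l₁ [], t], hl₁, by omega, hMk, hrb,
          List.Perm.refl _, rfl⟩

end CTree

open CTree in
theorem stmt7 (m k : ℕ) (hm : 1 ≤ m) (hk : 2 ≤ k) :
    ({τ : CTree m | ram τ = 1 ∧ ∀ σ : CTree m, ram σ = 1 → rho τ ≤ rho σ}
       = {τ : CTree m | ∃ l : Fin (m+1), 1 ≤ (l : ℕ) ∧ τ = .node l []})
    ∧ ({τ : CTree m | ram τ = k ∧ ∀ σ : CTree m, ram σ = k → rho τ ≤ rho σ}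
       = {τ : CTree m | ∃ (l₁ l₂ : Fin (m+1)) (σ : CTree m) (ts : List (CTree m)),
            1 ≤ (l₁ : ℕ) ∧ 1 ≤ (l₂ : ℕ) ∧
            (ram σ = k - 1 ∧ ∀ σ' : CTree m, ram σ' = k - 1 → rho σ ≤ rho σ') ∧
            ts.Perm [CTree.node l₁ [], σ] ∧ τ = .node l₂ ts})
    ∧ IsLeast {r : ℚ | ∃ τ : CTree m, ram τ = k ∧ rho τ = r} ((k : ℚ) - 1/2) := by
  have hck : ((k - 1 : ℕ) : ℚ) = (k : ℚ) - 1 := by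
    rw [Nat.cast_sub (by omega : 1 ≤ k), Nat.cast_one]
  have hck2 : ((k - 2 : ℕ) : ℚ) = (k : ℚ) - 2 := by
    rw [Nat.cast_sub (by omega : 2 ≤ k)]; norm_num
  have hleafρ : ∀ l : Fin (m+1), 1 ≤ (l : ℕ) → rho (CTree.node l ([] : List (CTree m))) = 1/2 := by
    intro l hl
    rw [rho_node, if_neg (by omega)]
    simp
  refine ⟨?_, ?_, ?_⟩
  · ext τ
    simp only [Set.mem_setOf_eq]
    constructor
    · rintro ⟨h1, h2⟩
      have hW := h2 (mt hm 0) (by rw [ram_mt])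
      rw [rho_mt] at hW
      have := half_le_rho τ
      exact rho_eq_half (by push_cast at hW; linarith)
    · rintro ⟨l, hl, rfl⟩
      exact ⟨ram_nil l, fun σ hσ => by rw [hleafρ l hl]; exact half_le_rho σ⟩
  · ext τ
    simp only [Set.mem_setOf_eq]
    constructor
    · rintro ⟨h1, h2⟩
      have hW := h2 (mt hm (k-1)) (by rw [ram_mt]; omega)
      rw [rho_mt, hck] at hW
      have hlow := ram_le_rho τ
      rw [h1] at hlow
      have hρ : rho τ = (k : ℚ) - 1/2 := by linarith
      obtain ⟨l₁, l₂, σ, ts, hl₁, hl₂, hσr, hσρ, hperm, rfl⟩ := key_forward hk h1 hρ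
      refine ⟨l₁, l₂, σ, ts, hl₁, hl₂, ⟨hσr, ?_⟩, hperm, rfl⟩
      intro σ' hσ'
      have := ram_le_rho σ'
      rw [hσ', hck] at this
      linarith
    · rintro ⟨l₁, l₂, σ, ts, hl₁, hl₂, ⟨hσr, hσmin⟩, hperm, rfl⟩
      have hσup := hσmin (mt hm (k-2)) (by rw [ram_mt]; omega)
      rw [rho_mt, hck2] at hσup
      have hσlow := ram_le_rho σ
      rw [hσr, hck] at hσlow
      have hσρ : rho σ = (k : ℚ) - 1 - 1/2 := by linarith
      have hram : ∀ ts', ts' = [CTree.node l₁ [], σ] ∨ ts' = [σ, CTree.node l₁ []] →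
          ram (CTree.node l₂ ts') = k ∧ rho (CTree.node l₂ ts') = (k : ℚ) - 1/2 := by
        rintro ts' (rfl | rfl)
        · refine ⟨by rw [ram_pair, ram_nil, hσr]; omega, ?_⟩
          rw [rho_node]
          simp only [List.map_cons, List.map_nil, List.sum_cons, List.sum_nil, add_zero,
            hleafρ l₁ hl₁, hσρ, if_neg (show ¬ (l₂ : ℕ) = 0 by omega)]
          ring
        · refine ⟨by rw [ram_pair, ram_nil, hσr]; omega, ?_⟩
          rw [rho_node]
          simp only [List.map_cons, List.map_nil, List.sum_cons, List.sum_nil, add_zero,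
            hleafρ l₁ hl₁, hσρ, if_neg (show ¬ (l₂ : ℕ) = 0 by omega)]
          ring
      obtain ⟨hr, hρ⟩ := hram ts (perm_pair hperm)
      refine ⟨hr, fun σ' hσ' => ?_⟩
      have := ram_le_rho σ'
      rw [hσ'] at this
      linarith
  · constructor
    · exact ⟨mt hm (k-1), by rw [ram_mt]; omega, by rw [rho_mt, hck]; ring⟩
    · rintro r ⟨τ, h1, rfl⟩
      have := ram_le_rho τ
      rw [h1] at this
      exact this
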